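/- Let H_A, H_B be finite-dimensional complex Hilbert spaces, let {|x⟩}_x be an orthonormal basis of H_A, and let ρ_AB be a positive semidefinite operator on H_A ⊗ H_B that is classical relative to {|x⟩}_x, i.e., ρ_AB = Σ_x |x⟩⟨x| ⊗ ρ_B^x for positive semidefinite operators ρ_B^x on H_B. Then the maximum of tr(ρ_AB · E_AB) over positive semidefinite E_AB with tr_A(E_AB) = id_B is attained by (and equals the maximum over) operators E_AB that are themselves classical relative to {|x⟩}_x, i.e., of the form E_AB = Σ_x |x⟩⟨x| ⊗ E_B^x. -/

import Mathlib

open Matrix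
open scoped Kronecker ComplexConjugate ComplexOrder

noncomputable section

/-- Partial trace over the first (A) subsystem. -/
def ptraceA {A B : Type*} [Fintype A] (M : Matrix (A × B) (A × B) ℂ) :
    Matrix B B ℂ :=
  Matrix.of fun i j => ∑ a : A, M (a, i) (a, j)

/-- Partial trace over the second (B) subsystem. -/
def ptraceB {A B : Type*} [Fintype B] (M : Matrix (A × B) (A × B) ℂ) :
    Matrix A A ℂ :=
  Matrix.of fun i j => ∑ b : B, M (i, b) (j, b)

/-- A density operator: positive semidefinite with unit trace. -/
def IsDensity {n : Type*} [Fintype n] (ρ : Matrix n n ℂ) : Prop :=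
  ρ.PosSemidef ∧ ρ.trace = 1

/-- Conditional min-entropy `H_min(A|B)_ρ = - inf_σ D_∞(ρ ‖ id_A ⊗ σ)`, where the
infimum ranges over density operators `σ` on `B` and
`D_∞(τ‖τ') = inf {λ | τ ≤ 2^λ τ'}`. -/
def Hmin {A B : Type*} [Fintype A] [Fintype B] [DecidableEq A] [DecidableEq B]
    (ρ : Matrix (A × B) (A × B) ℂ) : ℝ :=
  - sInf {l : ℝ | ∃ σ : Matrix B B ℂ, IsDensity σ ∧
      (((2 : ℝ) ^ l : ℝ) • ((1 : Matrix A A ℂ) ⊗ₖ σ) - ρ).PosSemidef}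

open scoped Classical in
/-- Positive semidefinite square root (junk value `0` off the PSD cone). -/
def psqrt {n : Type*} [Fintype n] [DecidableEq n] (M : Matrix n n ℂ) : Matrix n n ℂ :=
  if h : M.PosSemidef then
    (h.1.eigenvectorUnitary : Matrix n n ℂ) * diagonal ((↑) ∘ Real.sqrt ∘ h.1.eigenvalues) *
      (star (h.1.eigenvectorUnitary : Matrix n n ℂ)) else 0

/-- Trace norm `‖M‖₁ = tr √(Mᴴ M)`. -/
def traceNorm {n : Type*} [Fintype n] [DecidableEq n] (M : Matrix n n ℂ) : ℝ :=
  (psqrt (Mᴴ * M)).trace.re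

/-- Fidelity `F(ρ,σ) = ‖√ρ √σ‖₁`. -/
def fidelity {n : Type*} [Fintype n] [DecidableEq n] (ρ σ : Matrix n n ℂ) : ℝ :=
  traceNorm (psqrt ρ * psqrt σ)

/-- Choi matrix of a linear map on matrices. -/
def choi {B A' : Type*} [Fintype B] [DecidableEq B] [Fintype A']
    (F : Matrix B B ℂ →ₗ[ℂ] Matrix A' A' ℂ) : Matrix (B × A') (B × A') ℂ :=
  Matrix.of fun p q => (F (Matrix.single p.1 q.1 1)) p.2 q.2

/-- A quantum operation (CPTP map): completely positive (PSD Choi matrix, by Choi's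
theorem) and trace-preserving. -/
def IsCPTP {B A' : Type*} [Fintype B] [DecidableEq B] [Fintype A']
    (F : Matrix B B ℂ →ₗ[ℂ] Matrix A' A' ℂ) : Prop :=
  (choi F).PosSemidef ∧ ∀ M : Matrix B B ℂ, (F M).trace = M.trace

/-- The map `id_A ⊗ F` applied to a bipartite operator. -/
def idTensor {A B A' : Type*} [Fintype B]
    (F : Matrix B B ℂ →ₗ[ℂ] Matrix A' A' ℂ) (ρ : Matrix (A × B) (A × B) ℂ) :
    Matrix (A × A') (A × A') ℂ :=
  Matrix.of fun p q => (F (Matrix.of fun b b' => ρ (p.1, b) (q.1, b'))) p.2 q.2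

/-- The quadratic form `⟨ψ|M|ψ⟩` (real part). -/
def pureOverlap {n : Type*} [Fintype n] (ψ : n → ℂ) (M : Matrix n n ℂ) : ℝ :=
  (∑ p, ∑ q, conj (ψ p) * M p q * ψ q).re

/-- The maximally entangled state `|Φ⟩ = d^{-1/2} ∑ₓ |x⟩|x⟩`. -/
def maxEnt (A : Type*) [Fintype A] [DecidableEq A] : A × A → ℂ :=
  fun p => if p.1 = p.2 then ((Real.sqrt (Fintype.card A))⁻¹ : ℝ) else 0

/-- `q_corr(A|B)_ρ`: `d_A` times the maximal squared fidelity with the maximally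
entangled state achievable by quantum operations on `B`. -/
def qcorr {A B : Type*} [Fintype A] [Fintype B] [DecidableEq A] [DecidableEq B]
    (ρ : Matrix (A × B) (A × B) ℂ) : ℝ :=
  (Fintype.card A : ℝ) *
    sSup {x : ℝ | ∃ F : Matrix B B ℂ →ₗ[ℂ] Matrix A A ℂ, IsCPTP F ∧
      x = pureOverlap (maxEnt A) (idTensor F ρ)}

/-- The completely mixed state. -/
def mixed (A : Type*) [Fintype A] [DecidableEq A] : Matrix A A ℂ :=
  ((Fintype.card A : ℂ)⁻¹) • (1 : Matrix A A ℂ)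

/-- `q_decpl(A|B)_ρ`: `d_A` times the maximal squared fidelity with `τ_A ⊗ σ_B`. -/
def qdecpl {A B : Type*} [Fintype A] [Fintype B] [DecidableEq A] [DecidableEq B]
    (ρ : Matrix (A × B) (A × B) ℂ) : ℝ :=
  (Fintype.card A : ℝ) *
    sSup {x : ℝ | ∃ σ : Matrix B B ℂ, IsDensity σ ∧
      x = (fidelity ρ ((mixed A) ⊗ₖ σ)) ^ 2}

/-- Reduced state `tr_C |ψ⟩⟨ψ|` of a pure state `ψ` on `(A ⊗ B) ⊗ C`. -/
def redL {S C : Type*} [Fintype C] (ψ : S × C → ℂ) : Matrix S S ℂ :=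
  Matrix.of fun s s' => ∑ c, ψ (s, c) * conj (ψ (s', c))

/-- Reduced state `tr_B |ψ⟩⟨ψ|` on `A ⊗ C` of a pure state `ψ` on `(A ⊗ B) ⊗ C`. -/
def redAC {A B C : Type*} [Fintype B] (ψ : (A × B) × C → ℂ) :
    Matrix (A × C) (A × C) ℂ :=
  Matrix.of fun p q => ∑ b, ψ ((p.1, b), p.2) * conj (ψ ((q.1, b), q.2))


section Aux
variable {X B : Type*} [Fintype X] [Fintype B] [DecidableEq X] [DecidableEq B]

lemma classical_apply (ρB : X → Matrix B B ℂ) (x x' : X) (b b' : B) :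
    (∑ y : X, Matrix.single y y (1 : ℂ) ⊗ₖ ρB y) (x, b) (x', b') =
      if x = x' then ρB x b b' else 0 := by
  simp only [Matrix.sum_apply, kroneckerMap_apply, Matrix.single, Matrix.of_apply,
    ite_mul, one_mul, zero_mul, ite_and]
  simp [Finset.sum_ite_eq, Finset.sum_ite_eq']

lemma trace_classical_mul (ρB : X → Matrix B B ℂ) (E : Matrix (X × B) (X × B) ℂ) :
    ((∑ y : X, Matrix.single y y (1 : ℂ) ⊗ₖ ρB y) * E).trace =
      ∑ x : X, (ρB x * Matrix.of (fun b b' => E (x, b) (x, b'))).trace := by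
  simp only [Matrix.trace, Matrix.diag, Matrix.mul_apply, Matrix.of_apply]
  rw [Fintype.sum_prod_type]
  refine Finset.sum_congr rfl fun x _ => ?_
  refine Finset.sum_congr rfl fun b _ => ?_
  rw [Fintype.sum_prod_type]
  simp only [classical_apply, ite_mul, zero_mul]
  rw [show (∑ x1 : X, ∑ b' : B, if x = x1 then ρB x b b' * E (x1, b') (x, b) else 0) =
      ∑ x1 : X, if x = x1 then ∑ b' : B, ρB x b b' * E (x1, b') (x, b) else 0 from
    Finset.sum_congr rfl fun x1 _ => by split <;> simp]
  simp [Finset.sum_ite_eq]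

variable {n : Type*} [Fintype n] [DecidableEq n]

lemma quad_two (M : Matrix n n ℂ) (i j : n) (a c : ℂ) :
    dotProduct (star (Pi.single i a + Pi.single j c)) (M *ᵥ (Pi.single i a + Pi.single j c)) =
      conj a * M i i * a + conj a * (M i j * c) + conj c * (M j i * a) + conj c * (M j j * c) := by
  simp only [star_add, add_dotProduct, mulVec_add, dotProduct_add, mulVec_single]
  have h1 : ∀ (k l : n) (u v : ℂ), dotProduct (star (Pi.single k u)) (MulOpposite.op v • M.col l) =
      conj u * (M k l * v) := by
    intro k l u v
    simp [dotProduct, Pi.single_apply, apply_ite, Finset.sum_ite_eq']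
  simp only [h1]
  ring

lemma psd_diag_nonneg {M : Matrix n n ℂ} (hM : M.PosSemidef) (i : n) : 0 ≤ M i i := by
  have := hM.dotProduct_mulVec_nonneg (Pi.single i 1)
  simpa [dotProduct, Pi.single_apply, apply_ite, Finset.sum_ite_eq', mulVec_single] using this

lemma psd_entry_abs_le {M : Matrix n n ℂ} (hM : M.PosSemidef) (i j : n) :
    ‖M i j‖ ≤ (M i i).re + (M j j).re := by
  have hii := psd_diag_nonneg hM i
  have hjj := psd_diag_nonneg hM j
  rw [Complex.le_def] at hii hjj
  rcases eq_or_ne (M i j) 0 with h | h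
  · simp only [h, norm_zero]
    simpa using add_le_add hii.1 hjj.1
  · set z := M i j with hz
    set c : ℂ := -(conj z) / (‖z‖ : ℂ) with hc
    have habs : (‖z‖ : ℂ) ≠ 0 := by
      exact_mod_cast norm_ne_zero_iff.mpr h
    have hnorm : z * conj z = (‖z‖ : ℂ) * (‖z‖ : ℂ) := by
      rw [Complex.mul_conj, Complex.normSq_eq_norm_sq]
      push_cast; ring
    have hzc : z * c = -(‖z‖ : ℂ) := by
      rw [hc]
      field_simp
      linear_combination -hnorm
    have hcz : conj c * conj z = -(‖z‖ : ℂ) := by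
      rw [← _root_.map_mul, mul_comm, hzc]
      simp
    have hc1 : conj c * c = 1 := by
      rw [hc]
      simp only [map_div₀, map_neg, Complex.conj_conj, Complex.conj_ofReal]
      field_simp
      linear_combination hnorm
    have hji : M j i = conj z := by
      conv_lhs => rw [← hM.1]
      simp [conjTranspose_apply, hz]
    have hq := hM.dotProduct_mulVec_nonneg (Pi.single i 1 + Pi.single j c)
    rw [quad_two] at hq
    have hqe : conj (1:ℂ) * M i i * 1 + conj (1:ℂ) * (M i j * c) + conj c * (M j i * 1) +
        conj c * (M j j * c) = M i i + M j j - 2 * (‖z‖ : ℂ) := by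
      have h3 : conj c * (M j j * c) = M j j := by
        rw [mul_comm (M j j) c, ← mul_assoc, hc1, one_mul]
      rw [hji, h3]
      simp only [(starRingEnd ℂ).map_one, one_mul, mul_one, ← hz, hzc, hcz]
      ring
    rw [hqe, Complex.le_def] at hq
    have hre := hq.1
    simp only [Complex.sub_re, Complex.add_re, Complex.mul_re, Complex.ofReal_re,
      Complex.ofReal_im, Complex.zero_re] at hre
    have : ‖z‖ ≤ (M i i).re + (M j j).re := by
      norm_num at hre
      have h0 := norm_nonneg z
      linarith
    exact this

variable {X B : Type*} [Fintype X] [Fintype B] [DecidableEq X] [DecidableEq B]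

lemma isClosed_nonneg_complex : IsClosed {z : ℂ | 0 ≤ z} := by
  have : {z : ℂ | 0 ≤ z} = Complex.re ⁻¹' (Set.Ici 0) ∩ Complex.im ⁻¹' {0} := by
    ext z
    simp [Complex.le_def, eq_comm]
  rw [this]
  exact (isClosed_Ici.preimage Complex.continuous_re).inter
    (isClosed_singleton.preimage Complex.continuous_im)

lemma povmSet_isCompact :
    IsCompact {EB : X → Matrix B B ℂ | (∀ y, (EB y).PosSemidef) ∧ ∑ y, EB y = 1} := by
  set S := {EB : X → Matrix B B ℂ | (∀ y, (EB y).PosSemidef) ∧ ∑ y, EB y = 1} with hS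
  have heval : ∀ (y : X) (b b' : B),
      Continuous fun EB : X → Matrix B B ℂ => EB y b b' := by
    intro y b b'
    exact Continuous.matrix_elem (continuous_apply y) b b'
  have hclosed : IsClosed S := by
    have h1 : IsClosed {EB : X → Matrix B B ℂ | ∑ y, EB y = 1} :=
      isClosed_eq (continuous_finset_sum _ fun y _ => continuous_apply y) continuous_const
    have h2 : ∀ y : X, IsClosed {EB : X → Matrix B B ℂ | (EB y)ᴴ = EB y} := fun y =>
      isClosed_eq (Continuous.matrix_conjTranspose (continuous_apply y)) (continuous_apply y)
    have h3 : ∀ (y : X) (v : B → ℂ),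
        IsClosed {EB : X → Matrix B B ℂ | 0 ≤ dotProduct (star v) ((EB y) *ᵥ v)} := by
      intro y v
      refine isClosed_nonneg_complex.preimage ?_
      unfold dotProduct Matrix.mulVec dotProduct
      refine continuous_finset_sum _ fun b _ => Continuous.mul continuous_const ?_
      exact continuous_finset_sum _ fun b' _ => ((heval y b b').mul continuous_const)
    have : S = (⋂ y : X, ({EB : X → Matrix B B ℂ | (EB y)ᴴ = EB y} ∩
          ⋂ v : B → ℂ, {EB : X → Matrix B B ℂ | 0 ≤ dotProduct (star v) ((EB y) *ᵥ v)})) ∩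
        {EB : X → Matrix B B ℂ | ∑ y, EB y = 1} := by
      ext EB
      simp only [Set.mem_setOf_eq, Set.mem_inter_iff, Set.mem_iInter, hS, Matrix.posSemidef_iff_dotProduct_mulVec,
        Matrix.IsHermitian]
      try tauto
    rw [this]
    exact IsClosed.inter (isClosed_iInter fun y =>
      (h2 y).inter (isClosed_iInter fun v => h3 y v)) h1
  have hbound : S ⊆ Set.pi Set.univ fun _ : X => Set.pi Set.univ fun _ : B =>
      Set.pi Set.univ fun _ : B => Metric.closedBall (0 : ℂ) 2 := by
    rintro EB ⟨hpsd, hsum⟩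
    intro y _ b _ b' _
    have hdiag : ∀ (y : X) (b : B), (EB y b b).re ≤ 1 := by
      intro y b
      have hle : EB y b b ≤ ∑ y' : X, EB y' b b :=
        Finset.single_le_sum (fun y' _ => psd_diag_nonneg (hpsd y') b) (Finset.mem_univ y)
      have hsum1 : (∑ y' : X, EB y' b b) = 1 := by
        have h := congrFun (congrFun hsum b) b
        simpa [Matrix.sum_apply, Matrix.one_apply_eq] using h
      rw [hsum1] at hle
      simpa using (Complex.le_def.mp hle).1
    have habs := psd_entry_abs_le (hpsd y) b b'
    have h1 := hdiag y b
    have h2 := hdiag y b'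
    simp only [Metric.mem_closedBall, Complex.dist_eq, sub_zero]
    linarith
  refine IsCompact.of_isClosed_subset ?_ hclosed hbound
  exact isCompact_univ_pi fun _ => isCompact_univ_pi fun _ => isCompact_univ_pi fun _ =>
    isCompact_closedBall 0 2



variable {X B : Type*} [Fintype X] [Fintype B] [DecidableEq X] [DecidableEq B]

lemma classicalE_posSemidef (EB : X → Matrix B B ℂ) (h : ∀ y, (EB y).PosSemidef) :
    (∑ y : X, Matrix.single y y (1 : ℂ) ⊗ₖ EB y).PosSemidef := by
  refine Matrix.PosSemidef.of_dotProduct_mulVec_nonneg ?_ ?_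
  · ext ⟨x, b⟩ ⟨x', b'⟩
    simp only [conjTranspose_apply, classical_apply]
    rcases eq_or_ne x x' with rfl | hne
    · simp only [if_pos rfl]
      have := congrFun (congrFun (h x).1 b) b'
      simpa [conjTranspose_apply] using this
    · simp [hne, Ne.symm hne]
  · intro v
    have key : dotProduct (star v) ((∑ y : X, Matrix.single y y (1 : ℂ) ⊗ₖ EB y) *ᵥ v) =
        ∑ x : X, dotProduct (star fun b => v (x, b)) ((EB x) *ᵥ fun b => v (x, b)) := by
      simp only [dotProduct, Matrix.mulVec, dotProduct, Pi.star_apply]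
      rw [Fintype.sum_prod_type]
      refine Finset.sum_congr rfl fun x _ => Finset.sum_congr rfl fun b _ => ?_
      congr 1
      rw [Fintype.sum_prod_type]
      simp only [classical_apply, ite_mul, zero_mul]
      rw [show (∑ x1 : X, ∑ b' : B, if x = x1 then EB x b b' * v (x1, b') else 0) =
          ∑ x1 : X, if x = x1 then ∑ b' : B, EB x b b' * v (x1, b') else 0 from
        Finset.sum_congr rfl fun x1 _ => by split <;> simp]
      simp [Finset.sum_ite_eq]
    rw [key]
    exact Finset.sum_nonneg fun x _ => (h x).dotProduct_mulVec_nonneg _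

lemma blk_classical (EB : X → Matrix B B ℂ) (x : X) :
    Matrix.of (fun b b' => (∑ y : X, Matrix.single y y (1 : ℂ) ⊗ₖ EB y) (x, b) (x, b')) =
      EB x := by
  ext b b'
  simp [classical_apply]
end Aux

/-- for a classical `ρ_XB = ∑ₓ |x⟩⟨x| ⊗ ρ_B^x`, the maximum of
`tr(ρ E)` over PSD `E` with `tr_X E = id_B` is attained by (and equals the maximum
over) classical operators `E = ∑ₓ |x⟩⟨x| ⊗ E_B^x`. -/
theorem stmt2 {X B : Type*} [Fintype X] [Fintype B] [DecidableEq X] [DecidableEq B]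
    [Nonempty X] [Nonempty B]
    (ρB : X → Matrix B B ℂ) (hρB : ∀ x, (ρB x).PosSemidef) :
    ∃ v : ℝ,
      IsGreatest {x : ℝ | ∃ E : Matrix (X × B) (X × B) ℂ, E.PosSemidef ∧
          ptraceA E = 1 ∧
          x = ((∑ y : X, Matrix.single y y (1 : ℂ) ⊗ₖ ρB y) * E).trace.re} v ∧
      IsGreatest {x : ℝ | ∃ EB : X → Matrix B B ℂ, (∀ y, (EB y).PosSemidef) ∧
          (∑ y : X, EB y) = 1 ∧
          x = ((∑ y : X, Matrix.single y y (1 : ℂ) ⊗ₖ ρB y) *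
                (∑ y : X, Matrix.single y y (1 : ℂ) ⊗ₖ EB y)).trace.re} v := by
  classical
  set S := {EB : X → Matrix B B ℂ | (∀ y, (EB y).PosSemidef) ∧ ∑ y, EB y = 1} with hSdef
  set f : (X → Matrix B B ℂ) → ℝ := fun EB => (∑ x, (ρB x * EB x).trace).re with hfdef
  -- continuity
  have hf : Continuous f := by
    have hfe : f = fun EB => (∑ x : X, ∑ b : B, ∑ b' : B, ρB x b b' * EB x b' b).re := by
      funext EB
      simp [hfdef, Matrix.trace, Matrix.diag, Matrix.mul_apply]
    rw [hfe]
    exact Complex.continuous_re.comp (continuous_finset_sum _ fun x _ =>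
      continuous_finset_sum _ fun b _ => continuous_finset_sum _ fun b' _ =>
        continuous_const.mul (Continuous.matrix_elem (continuous_apply x) b' b))
  -- nonempty
  have hSne : S.Nonempty := by
    refine ⟨fun _ => Matrix.diagonal fun _ => (Fintype.card X : ℂ)⁻¹, ?_, ?_⟩
    · intro y
      refine Matrix.PosSemidef.diagonal fun _ => ?_
      rw [Complex.le_def]
      constructor
      · simp only [← Complex.ofReal_natCast, ← Complex.ofReal_inv, Complex.ofReal_re,
          Complex.zero_re]
        positivity
      · simp [← Complex.ofReal_natCast, ← Complex.ofReal_inv]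
    · ext i j
      simp only [Matrix.sum_apply, Matrix.diagonal_apply, Finset.sum_const, Finset.card_univ,
        nsmul_eq_mul]
      rcases eq_or_ne i j with rfl | hne
      · simp only [if_pos rfl, Matrix.one_apply_eq]
        rw [if_pos trivial]
        field_simp
      · simp [hne, Matrix.one_apply_ne hne]
  -- maximum
  obtain ⟨EB₀, hEB₀, hmax⟩ := povmSet_isCompact.exists_isMaxOn hSne hf.continuousOn
  refine ⟨f EB₀, ⟨⟨∑ y : X, Matrix.single y y (1 : ℂ) ⊗ₖ EB₀ y,
      classicalE_posSemidef EB₀ hEB₀.1, ?_, ?_⟩, ?_⟩,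
    ⟨⟨EB₀, hEB₀.1, hEB₀.2, ?_⟩, ?_⟩⟩
  · -- ptraceA classical = 1
    ext i j
    simp only [ptraceA, Matrix.of_apply, classical_apply, if_pos rfl]
    have := congrFun (congrFun hEB₀.2 i) j
    simpa [Matrix.sum_apply] using this
  · -- value of classical E₀ equals f EB₀
    rw [trace_classical_mul]
    simp only [blk_classical, hfdef]
  · -- upper bound on general set
    rintro r ⟨E, hE, hptr, rfl⟩
    rw [trace_classical_mul]
    have hmem : (fun x => Matrix.of fun b b' => E (x, b) (x, b')) ∈ S := by
      constructor
      · intro y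
        exact hE.submatrix fun b => (y, b)
      · ext i j
        have := congrFun (congrFun hptr i) j
        simpa [ptraceA, Matrix.sum_apply] using this
    exact hmax hmem
  · -- value of classical EB₀ in second set
    rw [trace_classical_mul]
    simp only [blk_classical, hfdef]
  · -- upper bound on classical set
    rintro r ⟨EB, hEBp, hEBs, rfl⟩
    rw [trace_classical_mul]
    have : (fun x => Matrix.of fun b b' =>
        (∑ y : X, Matrix.single y y (1 : ℂ) ⊗ₖ EB y) (x, b) (x, b')) = EB := by
      funext x; exact blk_classical EB x
    rw [show (∑ x : X, (ρB x * Matrix.of fun b b' =>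
        (∑ y : X, Matrix.single y y (1 : ℂ) ⊗ₖ EB y) (x, b) (x, b')).trace).re
        = f EB by simp [blk_classical, hfdef]]
    exact hmax ⟨hEBp, hEBs⟩


end
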